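/- The precision-maximizing mapping of messages to servers, given the adversary's observations O, is a matching on the bipartite graph (V_H, X) that maximizes the total weight Σ_{(v,x)∈M} P(X_v = x | O); i.e., for any mapping M there exists a matching M' with E[D_{M'} | O] ≥ E[D_M | O], and among matchings the expected precision equals the matching weight, so the optimum is a maximum-weight bipartite matching. -/

import Mathlib

open Finset

/-- Expected macro-averaged precision of a mapping `M : X → V_H`, given posteriors
`w v x = P(X_v = x | O)`; a server mapped `k` messages contributes the average of
their posteriors (0/0 = 0 convention is Lean's division by zero). -/
noncomputable def precOf {V X : Type*} [Fintype V] [Fintype X] [DecidableEq V]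
    (w : V → X → ℝ) (M : X → V) : ℝ :=
  (∑ v : V, (∑ x ∈ Finset.univ.filter (fun x => M x = v), w v x) /
      ((Finset.univ.filter (fun x => M x = v)).card : ℝ)) / (Fintype.card V : ℝ)

lemma prec_inj_aux {V X : Type*} [Fintype V] [Fintype X] [DecidableEq V] [DecidableEq X]
    (w : V → X → ℝ) (M' : X → V) (h : Function.Injective M') :
    precOf w M' = (∑ x : X, w (M' x) x) / (Fintype.card V : ℝ) := by
  unfold precOf
  congr 1
  rw [← Finset.sum_fiberwise (univ : Finset X) M' (fun x => w (M' x) x)]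
  apply Finset.sum_congr rfl
  intro v _
  have hc : (univ.filter (fun x => M' x = v)).card ≤ 1 := by
    apply Finset.card_le_one.mpr
    intro a ha b hb
    simp only [mem_filter] at ha hb
    exact h (ha.2.trans hb.2.symm)
  have hcongr : ∑ x ∈ univ.filter (fun x => M' x = v), w v x
      = ∑ x ∈ univ.filter (fun x => M' x = v), w (M' x) x := by
    apply sum_congr rfl; intro x hx; simp only [mem_filter] at hx; rw [hx.2]
  rcases Nat.le_one_iff_eq_zero_or_eq_one.mp hc with h0 | h1
  · rw [Finset.card_eq_zero] at h0
    simp [h0]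
  · rw [h1, Nat.cast_one, div_one, hcongr]

theorem stmt_4 {V X : Type*} [Fintype V] [Fintype X] [DecidableEq V] [DecidableEq X]
    (w : V → X → ℝ) (hw : ∀ v x, 0 ≤ w v x)
    (hcard : Fintype.card X = Fintype.card V) :
    (∀ M : X → V, ∃ M' : X → V, Function.Injective M' ∧ precOf w M ≤ precOf w M') ∧
    (∀ M' : X → V, Function.Injective M' →
      precOf w M' = (∑ x : X, w (M' x) x) / (Fintype.card V : ℝ)) := by
  classical
  refine ⟨?_, fun M' h => prec_inj_aux w M' h⟩
  intro M
  by_cases hX : Nonempty X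
  case neg =>
    exact ⟨M, fun a => absurd ⟨a⟩ hX, le_refl _⟩
  -- representatives
  set fib : V → Finset X := fun v => univ.filter (fun x => M x = v) with hfib
  set S : Finset V := univ.filter (fun v => (fib v).Nonempty) with hS
  have hrep : ∀ v : V, v ∈ S → ∃ x ∈ fib v, ∀ y ∈ fib v, w v y ≤ w v x := by
    intro v hv
    simp only [hS, mem_filter] at hv
    exact Finset.exists_max_image (fib v) (w v) hv.2
  set r : V → X := fun v =>
    if h : v ∈ S then (hrep v h).choose else Classical.arbitrary X with hr
  have hrmem : ∀ v ∈ S, r v ∈ fib v := by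
    intro v hv; simp only [hr, dif_pos hv]; exact (hrep v hv).choose_spec.1
  have hrmax : ∀ v ∈ S, ∀ y ∈ fib v, w v y ≤ w v (r v) := by
    intro v hv; simp only [hr, dif_pos hv]; exact (hrep v hv).choose_spec.2
  have hrM : ∀ v ∈ S, M (r v) = v := by
    intro v hv
    have := hrmem v hv
    simp only [hfib, mem_filter] at this
    exact this.2
  set T : Finset X := S.image r with hT
  have hTcard : T.card = S.card := by
    apply Finset.card_image_of_injOn
    intro a ha b hb hab
    rw [← hrM a ha, ← hrM b hb, hab]
  have hcompl : ((univ : Finset V) \ S).card = ((univ : Finset X) \ T).card := by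
    rw [Finset.card_sdiff_of_subset (subset_univ _), Finset.card_sdiff_of_subset (subset_univ _),
      Finset.card_univ, Finset.card_univ, hTcard, hcard]
  set e : ((univ : Finset V) \ S : Finset V) ≃ ((univ : Finset X) \ T : Finset X) :=
    Finset.equivOfCardEq hcompl with he
  set f : V → X := fun v =>
    if h : v ∈ S then r v else (e ⟨v, by simp [h]⟩ : X) with hf
  have hfS : ∀ v ∈ S, f v = r v := fun v hv => by simp [hf, dif_pos hv]
  have hfT : ∀ v, v ∉ S → f v ∉ T := by
    intro v hv
    have := (e ⟨v, by simp [hv]⟩).2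
    rw [Finset.mem_sdiff] at this
    simpa [hf, dif_neg hv] using this.2
  have hinj : Function.Injective f := by
    intro a b hab
    by_cases ha : a ∈ S <;> by_cases hb : b ∈ S
    · rw [hfS a ha, hfS b hb] at hab
      rw [← hrM a ha, ← hrM b hb, hab]
    · exfalso
      apply hfT b hb
      rw [← hab, hfS a ha]
      exact Finset.mem_image_of_mem r ha
    · exfalso
      apply hfT a ha
      rw [hab, hfS b hb]
      exact Finset.mem_image_of_mem r hb
    · have : (e ⟨a, by simp [ha]⟩ : X) = (e ⟨b, by simp [hb]⟩ : X) := by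
        simpa [hf, dif_neg ha, dif_neg hb] using hab
      have := e.injective (Subtype.ext this)
      exact Subtype.ext_iff.mp this
  have hbij : Function.Bijective f :=
    (Fintype.bijective_iff_injective_and_card f).mpr ⟨hinj, hcard.symm⟩
  set g : V ≃ X := Equiv.ofBijective f hbij with hg
  refine ⟨g.symm, g.symm.injective, ?_⟩
  rw [prec_inj_aux w g.symm g.symm.injective]
  have hsum : (∑ x : X, w (g.symm x) x) = ∑ v : V, w v (f v) := by
    rw [← Equiv.sum_comp g (fun x => w (g.symm x) x)]
    apply Finset.sum_congr rfl
    intro v _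
    simp only [Equiv.symm_apply_apply, Equiv.ofBijective_apply]
    rfl
  rw [hsum]
  have hle : (∑ v : V, (∑ x ∈ univ.filter (fun x => M x = v), w v x) /
      ((univ.filter (fun x => M x = v)).card : ℝ)) ≤ ∑ v : V, w v (f v) := by
    apply Finset.sum_le_sum
    intro v _
    by_cases hv : v ∈ S
    · rw [hfS v hv]
      have hne : (fib v).Nonempty := by
        have := mem_filter.mp (hS ▸ hv)
        exact this.2
      have hpos : 0 < ((fib v).card : ℝ) := by
        exact_mod_cast Finset.card_pos.mpr hne
      rw [show (univ.filter (fun x => M x = v)) = fib v from rfl, div_le_iff₀ hpos]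
      calc ∑ x ∈ fib v, w v x ≤ (fib v).card • w v (r v) :=
            Finset.sum_le_card_nsmul _ _ _ (hrmax v hv)
        _ = w v (r v) * (fib v).card := by rw [nsmul_eq_mul, mul_comm]
    · have hemp : fib v = ∅ := by
        by_contra h
        exact hv (by simp [hS, hfib, Finset.nonempty_iff_ne_empty,
          show fib v ≠ ∅ from h]; obtain ⟨a, ha⟩ := Finset.nonempty_iff_ne_empty.mpr h; simp only [hfib, mem_filter] at ha; exact ⟨a, ha.2⟩)
      have : (univ.filter (fun x => M x = v)) = (∅ : Finset X) := hemp
      simp [this, hw]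
  have hVpos : (0:ℝ) ≤ (Fintype.card V : ℝ) := by positivity
  unfold precOf
  exact div_le_div_of_nonneg_right hle hVpos
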